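/- Let Γ be a finite quiver containing no oriented cycles and let (H,f) be a non-zero Hilbert representation of Γ. Then (H,f) is simple if and only if (H,f) is canonically simple, i.e., there exists a vertex v₀ with H_{v₀} = ℂ, H_v = 0 for every vertex v ≠ v₀, and f_α = 0 for every arrow α. -/
import Mathlib


/-- **For a finite quiver with no oriented cycles, a non-zero Hilbert representation is
simple iff it is canonically simple.**
The quiver is given by finite types `V`, `E` and maps `s r : E → V`; having no oriented
cycles is expressed by the irreflexivity of the transitive closure of the arrow relation.
Simplicity: the only subrepresentations (families of closed invariant subspaces) are `0`
and the whole representation.  Canonical simplicity: there is a vertex `v₀` such that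
`H v₀` is one-dimensional (i.e. `H v₀ = ℂ`), `H v = 0` for every other vertex `v`, and
`f α = 0` for every arrow `α`. -/
theorem stmt_1
    {V E : Type*} [Fintype V] [Fintype E] (s r : E → V)
    (H : V → Type*) [∀ v, NormedAddCommGroup (H v)]
    [∀ v, InnerProductSpace ℂ (H v)] [∀ v, CompleteSpace (H v)]
    (f : ∀ α : E, H (s α) →L[ℂ] H (r α))
    -- `Γ` contains no oriented cycles
    (hacyclic : ∀ v : V,
      ¬ Relation.TransGen (fun v w : V => ∃ α : E, s α = v ∧ r α = w) v v)
    -- `(H,f)` is non-zero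
    (hnz : ∃ v : V, ∃ x : H v, x ≠ 0) :
    -- `(H,f)` is simple
    ((∀ K : ∀ v : V, Submodule ℂ (H v),
        (∀ v, IsClosed (K v : Set (H v))) →
        (∀ α : E, ∀ x ∈ K (s α), f α x ∈ K (r α)) →
        (∀ v, K v = ⊥) ∨ (∀ v, K v = ⊤))
      ↔
    -- iff `(H,f)` is canonically simple
      (∃ v₀ : V,
        (∃ x : H v₀, x ≠ 0 ∧ ∀ y : H v₀, ∃ c : ℂ, y = c • x) ∧
        (∀ v : V, v ≠ v₀ → ∀ x : H v, x = 0) ∧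
        (∀ α : E, f α = 0))) := by
  classical
  constructor
  · intro hsimple
    set rel : V → V → Prop := fun v w => ∃ α : E, s α = v ∧ r α = w with hrel
    -- the subrepresentation generated by the images of all arrows
    set Ktot : ∀ v : V, Submodule ℂ (H v) := fun v =>
      (⨆ α : E, ⨆ h : r α = v,
        h ▸ LinearMap.range ((f α : H (s α) →ₗ[ℂ] H (r α)))).topologicalClosure
      with hKtot
    have hmem : ∀ α : E, ∀ x : H (s α), f α x ∈ Ktot (r α) := by
      intro α x
      have h0 : f α x ∈ LinearMap.range ((f α : H (s α) →ₗ[ℂ] H (r α))) := ⟨x, rfl⟩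
      have h1 : LinearMap.range ((f α : H (s α) →ₗ[ℂ] H (r α))) ≤
          ⨆ α' : E, ⨆ h : r α' = r α,
            h ▸ LinearMap.range ((f α' : H (s α') →ₗ[ℂ] H (r α'))) :=
        le_iSup_of_le α
          (le_iSup (fun h : r α = r α =>
            h ▸ LinearMap.range ((f α : H (s α) →ₗ[ℂ] H (r α)))) rfl)
      exact Submodule.le_topologicalClosure _ (h1 h0)
    have hclosed : ∀ v, IsClosed (Ktot v : Set (H v)) := fun v =>
      Submodule.isClosed_topologicalClosure _
    have hinv : ∀ α : E, ∀ x ∈ Ktot (s α), f α x ∈ Ktot (r α) := fun α x _ => hmem α x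
    rcases hsimple Ktot hclosed hinv with hB | hT
    · -- all arrows vanish
      have hf0 : ∀ α : E, f α = 0 := by
        intro α
        ext x
        have := hmem α x
        rw [hB] at this
        simpa using this
      obtain ⟨v₀, x, hx⟩ := hnz
      set Kspan : ∀ v : V, Submodule ℂ (H v) := fun v =>
        if h : v₀ = v then h ▸ (ℂ ∙ x) else ⊥ with hKspan
      have hKv₀ : Kspan v₀ = (ℂ ∙ x) := by simp [hKspan]
      have hKv : ∀ v, v₀ ≠ v → Kspan v = ⊥ := by
        intro v hv; simp [hKspan, hv]
      have hclosed' : ∀ v, IsClosed (Kspan v : Set (H v)) := by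
        intro v
        by_cases h : v₀ = v
        · subst h
          rw [hKv₀]
          exact Submodule.closed_of_finiteDimensional _
        · rw [hKv v h]
          exact Submodule.closed_of_finiteDimensional _
      have hinv' : ∀ α : E, ∀ y ∈ Kspan (s α), f α y ∈ Kspan (r α) := by
        intro α y _
        rw [hf0]
        exact Submodule.zero_mem _
      have hxmem : x ∈ Kspan v₀ := by
        rw [hKv₀]; exact Submodule.mem_span_singleton_self x
      rcases hsimple Kspan hclosed' hinv' with hall | hall
      · exact absurd (by simpa [hall v₀] using hxmem) hx
      · refine ⟨v₀, ⟨x, hx, ?_⟩, ?_, hf0⟩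
        · intro y
          have hy : y ∈ Kspan v₀ := (hall v₀).symm ▸ Submodule.mem_top
          rw [hKv₀] at hy
          obtain ⟨c, hc⟩ := Submodule.mem_span_singleton.mp hy
          exact ⟨c, hc.symm⟩
        · intro v hv z
          have hz : z ∈ Kspan v := (hall v).symm ▸ Submodule.mem_top
          rw [hKv v (Ne.symm hv)] at hz
          simpa using hz
    · -- contradiction with acyclicity
      exfalso
      have hpred : ∀ v : V, (∃ x : H v, x ≠ 0) → ∃ w : V, (∃ y : H w, y ≠ 0) ∧ rel w v := by
        intro v ⟨x, hx⟩
        by_contra hc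
        push_neg at hc
        have hbot : (⨆ α : E, ⨆ h : r α = v,
            h ▸ LinearMap.range ((f α : H (s α) →ₗ[ℂ] H (r α)))) = ⊥ := by
          rw [iSup_eq_bot]
          intro α
          rw [iSup_eq_bot]
          intro h
          subst h
          have hzero : ∀ y : H (s α), y = 0 := by
            intro y
            by_contra hy
            exact hc (s α) ⟨y, hy⟩ ⟨α, rfl, rfl⟩
          show LinearMap.range ((f α : H (s α) →ₗ[ℂ] H (r α))) = ⊥
          rw [LinearMap.range_eq_bot]
          ext z
          rw [hzero z]
          simp
        have hKv : Ktot v = ⊥ := by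
          rw [hKtot]
          simp only [hbot]
          exact IsClosed.submodule_topologicalClosure_eq (by rw [Submodule.bot_coe]; exact isClosed_singleton)
        rw [hT v] at hKv
        have : x ∈ (⊥ : Submodule ℂ (H v)) := hKv ▸ Submodule.mem_top
        exact hx (by simpa using this)
      -- build an infinite backwards chain
      obtain ⟨v₁, hv₁⟩ := hnz
      set N := {v : V // ∃ x : H v, x ≠ 0} with hN
      have hp : ∀ n : N, ∃ m : N, rel m.1 n.1 := by
        intro n
        obtain ⟨w, hw, hr⟩ := hpred n.1 n.2
        exact ⟨⟨w, hw⟩, hr⟩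
      choose p hp' using hp
      set g : ℕ → N := fun n => p^[n] ⟨v₁, hv₁⟩ with hg
      have hstep : ∀ n, rel (g (n + 1)).1 (g n).1 := by
        intro n
        have : g (n + 1) = p (g n) := by
          rw [hg]; simp [Function.iterate_succ_apply']
        rw [this]
        exact hp' (g n)
      have htrans : ∀ i k, Relation.TransGen rel (g (i + k + 1)).1 (g i).1 := by
        intro i k
        induction k with
        | zero => exact Relation.TransGen.single (hstep i)
        | succ k ih => exact Relation.TransGen.head (hstep (i + k + 1)) ih
      obtain ⟨i, j, hne, hij⟩ := Finite.exists_ne_map_eq_of_infinite g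
      rcases Nat.lt_or_ge i j with hlt | hge
      · obtain ⟨k, hk⟩ : ∃ k, j = i + k + 1 := ⟨j - i - 1, by omega⟩
        have := htrans i k
        rw [← hk, hij] at this
        exact hacyclic (g j).1 this
      · have hlt : j < i := lt_of_le_of_ne hge (fun h => hne h.symm)
        obtain ⟨k, hk⟩ : ∃ k, i = j + k + 1 := ⟨i - j - 1, by omega⟩
        have := htrans j k
        rw [← hk, ← hij] at this
        exact hacyclic (g i).1 this
  · rintro ⟨v₀, ⟨x, hx, hspan⟩, hzero, hf0⟩ K hcl hinvK
    by_cases hK : K v₀ = ⊥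
    · left
      intro v
      by_cases h : v = v₀
      · subst h; exact hK
      · exact (Submodule.eq_bot_iff _).mpr fun z _ => hzero v h z
    · right
      intro v
      by_cases h : v = v₀
      · rw [h]
        obtain ⟨y, hyK, hy⟩ := Submodule.exists_mem_ne_zero_of_ne_bot hK
        obtain ⟨c, hc⟩ := hspan y
        have hc0 : c ≠ 0 := by
          intro h0
          apply hy
          rw [hc, h0, zero_smul]
        have hxK : x ∈ K v₀ := by
          have : x = c⁻¹ • y := by rw [hc, smul_smul, inv_mul_cancel₀ hc0, one_smul]
          rw [this]
          exact Submodule.smul_mem _ _ hyK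
        rw [Submodule.eq_top_iff']
        intro z
        obtain ⟨d, hd⟩ := hspan z
        rw [hd]
        exact Submodule.smul_mem _ _ hxK
      · rw [Submodule.eq_top_iff']
        intro z
        rw [hzero v h z]
        exact Submodule.zero_mem _
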